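/- arXiv:2309.15089 — 3 statements merged into one kernel-verified Lean document; each statement's English description precedes it below -/
import Mathlib

section
/- Let K be a field and let 0 → C' → C → C'' → 0 be a degreewise short exact sequence of ℤ-indexed chain complexes of K-vector spaces, each of which is finite-dimensional in every degree. Then dim_t H(C') + dim_t H(C'') ⪰ dim_t H(C); explicitly, there exists A : ℤ → ℕ such that for every i ∈ ℤ, dim_K H_i(C') + dim_K H_i(C'') − dim_K H_i(C) = A i + A (i−1). In particular dim_K H_i(C) ≤ dim_K H_i(C') + dim_K H_i(C'') for every i. -/
open CategoryTheory

private lemma finrank_eq_of_exact_aux (K : Type) [Field K] {X Y Z : ModuleCat K}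
    [FiniteDimensional K Y] (u : X ⟶ Y) (v : Y ⟶ Z) (w : u ≫ v = 0)
    (h : (ShortComplex.mk u v w).Exact) :
    Module.finrank K Y =
      Module.finrank K (LinearMap.range u.hom) + Module.finrank K (LinearMap.range v.hom) := by
  have := h.moduleCat_range_eq_ker
  rw [← LinearMap.finrank_range_add_finrank_ker (v.hom : Y →ₗ[K] Z), ← this, add_comm]

private lemma homology_fd_aux (K : Type) [Field K] (C : ChainComplex (ModuleCat K) ℤ)
    (hC : ∀ i : ℤ, FiniteDimensional K (C.X i)) (i : ℤ) :
    FiniteDimensional K (C.homology i) := by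
  have h1 : Mono (C.iCycles i) := inferInstance
  have h2 : Epi (C.homologyπ i) := inferInstance
  rw [ModuleCat.mono_iff_injective] at h1
  rw [ModuleCat.epi_iff_surjective] at h2
  have : FiniteDimensional K (C.cycles i) :=
    FiniteDimensional.of_injective ((C.iCycles i).hom : C.cycles i →ₗ[K] C.X i) h1
  exact Module.Finite.of_surjective ((C.homologyπ i).hom : C.cycles i →ₗ[K] C.homology i) h2

/-- **Sub-additivity of `dim_t` for short exact sequences of chain complexes.**
Let `K` be a field and `0 → C' → C → C'' → 0` a degreewise short exact sequence of
`ℤ`-indexed chain complexes of `K`-vector spaces, each finite-dimensional in every degree.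
Then `dim_t H(C') + dim_t H(C'') ⪰ dim_t H(C)`: there is `A : ℤ → ℕ` with
`dim H_i(C') + dim H_i(C'') − dim H_i(C) = A i + A (i−1)` for all `i`; in particular
`dim H_i(C) ≤ dim H_i(C') + dim H_i(C'')` for every `i`. -/
theorem dimt_subadditive_of_shortExact
    (K : Type) [Field K]
    (C' C C'' : ChainComplex (ModuleCat K) ℤ)
    (hC' : ∀ i : ℤ, FiniteDimensional K (C'.X i))
    (hC : ∀ i : ℤ, FiniteDimensional K (C.X i))
    (hC'' : ∀ i : ℤ, FiniteDimensional K (C''.X i))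
    (f : C' ⟶ C) (g : C ⟶ C'')
    (hinj : ∀ i : ℤ, Function.Injective (f.f i))
    (hexact : ∀ i : ℤ, LinearMap.range (f.f i).hom = LinearMap.ker (g.f i).hom)
    (hsurj : ∀ i : ℤ, Function.Surjective (g.f i)) :
    (∃ A : ℤ → ℕ, ∀ i : ℤ,
      ((Module.finrank K (C'.homology i) : ℤ) +
        (Module.finrank K (C''.homology i) : ℤ)) -
        (Module.finrank K (C.homology i) : ℤ) = (A i : ℤ) + (A (i - 1) : ℤ)) ∧
    (∀ i : ℤ, Module.finrank K (C.homology i) ≤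
      Module.finrank K (C'.homology i) + Module.finrank K (C''.homology i)) := by
  have hzero : f ≫ g = 0 := by
    ext i x
    have : (f.f i).hom x ∈ LinearMap.ker (g.f i).hom := (hexact i) ▸ LinearMap.mem_range_self _ x
    simpa using this
  set S : ShortComplex (ChainComplex (ModuleCat K) ℤ) := ShortComplex.mk f g hzero with hS_def
  have hS : S.ShortExact := by
    apply HomologicalComplex.shortExact_of_degreewise_shortExact
    intro i
    refine ShortComplex.ShortExact.mk' ?_ ?_ ?_
    · exact ShortComplex.Exact.moduleCat_of_range_eq_ker (f.f i) (g.f i) (hexact i)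
    · exact (ModuleCat.mono_iff_injective _).mpr (hinj i)
    · exact (ModuleCat.epi_iff_surjective _).mpr (hsurj i)
  have fd' : ∀ i, FiniteDimensional K (C'.homology i) := homology_fd_aux K C' hC'
  have fd : ∀ i, FiniteDimensional K (C.homology i) := homology_fd_aux K C hC
  have fd'' : ∀ i, FiniteDimensional K (C''.homology i) := homology_fd_aux K C'' hC''
  have hrel : ∀ i : ℤ, (ComplexShape.down ℤ).Rel i (i - 1) := by
    intro i; simp
  have rk_indep : ∀ (i j j' : ℤ) (e : j = j') (h : (ComplexShape.down ℤ).Rel i j)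
      (h' : (ComplexShape.down ℤ).Rel i j'),
      Module.finrank K (LinearMap.range (hS.δ i j h).hom) =
      Module.finrank K (LinearMap.range (hS.δ i j' h').hom) := by
    intro i j j' e h h'
    subst e
    rfl
  set B : ℤ → ℕ := fun i => Module.finrank K (LinearMap.range (hS.δ i (i - 1) (hrel i)).hom)
    with hB
  have key : ∀ i : ℤ,
      ((Module.finrank K (C'.homology i) : ℤ) +
        (Module.finrank K (C''.homology i) : ℤ)) -
        (Module.finrank K (C.homology i) : ℤ) = (B (i + 1) : ℤ) + (B i : ℤ) ∧
      Module.finrank K (C.homology i) ≤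
        Module.finrank K (C'.homology i) + Module.finrank K (C''.homology i) := by
    intro i
    have hrel1 : (ComplexShape.down ℤ).Rel (i + 1) i := by simp
    have e1 := hS.homology_exact₁ (i + 1) i hrel1
    have e2 := hS.homology_exact₂ i
    have e3 := hS.homology_exact₃ i (i - 1) (hrel i)
    have d1 := finrank_eq_of_exact_aux K _ _ _ e1
    have d2 := finrank_eq_of_exact_aux K _ _ _ e2
    have d3 := finrank_eq_of_exact_aux K _ _ _ e3
    have hB1 : B (i + 1) =
        Module.finrank K (LinearMap.range (hS.δ (i + 1) i hrel1).hom) := by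
      rw [hB]
      exact rk_indep (i + 1) (i + 1 - 1) i (by omega) _ _
    have d1' : Module.finrank K (C'.homology i) = B (i + 1) +
        Module.finrank K (LinearMap.range (HomologicalComplex.homologyMap S.f i).hom) := by
      rw [hB1]; exact d1
    have d2' : Module.finrank K (C.homology i) =
        Module.finrank K (LinearMap.range (HomologicalComplex.homologyMap S.f i).hom) +
        Module.finrank K (LinearMap.range (HomologicalComplex.homologyMap S.g i).hom) := d2
    have d3' : Module.finrank K (C''.homology i) =
        Module.finrank K (LinearMap.range (HomologicalComplex.homologyMap S.g i).hom) +
        B i := d3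
    exact ⟨by omega, by omega⟩
  refine ⟨⟨fun i => B (i + 1), fun i => ?_⟩, fun i => (key i).2⟩
  show _ = (B (i + 1) : ℤ) + (B (i - 1 + 1) : ℤ)
  rw [(key i).1, show i - 1 + 1 = i from by omega]
end

section
/- Let K be a field and let C be a ℤ-indexed chain complex of K-vector spaces which is finite-dimensional in every degree, equipped with a finite filtration by subcomplexes 0 = F⁰C ⊆ F¹C ⊆ … ⊆ FⁿC = C. Then dim_t H(C) ⪯ Σ_{p=1}^{n} dim_t H(F^pC/F^{p−1}C); explicitly, there exists A : ℤ → ℕ such that for every i ∈ ℤ, Σ_{p=1}^{n} dim_K H_i(F^pC/F^{p−1}C) − dim_K H_i(C) = A i + A (i−1). In particular dim_K H_i(C) ≤ Σ_{p=1}^{n} dim_K H_i(F^pC/F^{p−1}C) for every i. -/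
open CategoryTheory Module

variable {K : Type} [Field K]

lemma fdHomology (C : ChainComplex (ModuleCat K) ℤ)
    (h : ∀ i, FiniteDimensional K (C.X i)) (i : ℤ) :
    FiniteDimensional K (C.homology i) := by
  have := h i
  have h1 : Function.Injective (C.iCycles i) :=
    (ModuleCat.mono_iff_injective _).mp inferInstance
  have h2 : Function.Surjective (C.homologyπ i) :=
    (ModuleCat.epi_iff_surjective _).mp inferInstance
  have : FiniteDimensional K (C.cycles i) :=
    FiniteDimensional.of_injective (C.iCycles i).hom h1
  exact Module.Finite.of_surjective (C.homologyπ i).hom h2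

lemma subsingletonHomology (C : ChainComplex (ModuleCat K) ℤ)
    (h : ∀ i, Subsingleton (C.X i)) (i : ℤ) :
    Module.finrank K (C.homology i) = 0 := by
  have := h i
  have h1 : Function.Injective (C.iCycles i) :=
    (ModuleCat.mono_iff_injective _).mp inferInstance
  have h2 : Function.Surjective (C.homologyπ i) :=
    (ModuleCat.epi_iff_surjective _).mp inferInstance
  have : Subsingleton (C.cycles i) := h1.subsingleton
  have : Subsingleton (C.homology i) := h2.subsingleton
  exact Module.finrank_zero_of_subsingleton

lemma rank_of_exact {A B C : ModuleCat K} (f : A ⟶ B) (g : B ⟶ C) (w : f ≫ g = 0)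
    (h : (ShortComplex.mk f g w).Exact) [FiniteDimensional K B] :
    finrank K B = finrank K (LinearMap.range g.hom) + finrank K (LinearMap.range f.hom) := by
  have hk := h.moduleCat_range_eq_ker
  rw [← LinearMap.finrank_range_add_finrank_ker g.hom, hk]

lemma ses_rank (S : ShortComplex (HomologicalComplex (ModuleCat K) (ComplexShape.down ℤ)))
    (hS : S.ShortExact)
    (h1 : ∀ i, FiniteDimensional K (S.X₁.homology i))
    (h2 : ∀ i, FiniteDimensional K (S.X₂.homology i))
    (h3 : ∀ i, FiniteDimensional K (S.X₃.homology i)) :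
    ∃ B : ℤ → ℕ, ∀ i : ℤ,
      (finrank K (S.X₁.homology i) : ℤ) + finrank K (S.X₃.homology i)
        - finrank K (S.X₂.homology i) = B i + B (i - 1) := by
  have rel : ∀ j : ℤ, (ComplexShape.down ℤ).Rel (j + 1) j := fun j => rfl
  have congrδ : ∀ (i i' j : ℤ) (h : (ComplexShape.down ℤ).Rel i j)
      (h' : (ComplexShape.down ℤ).Rel i' j) (e : i = i'),
      finrank K (LinearMap.range (hS.δ i j h).hom) = finrank K (LinearMap.range (hS.δ i' j h').hom) := by
    intro i i' j h h' e; subst e; rfl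
  refine ⟨fun j => finrank K (LinearMap.range (hS.δ (j + 1) j (rel j)).hom), ?_⟩
  intro i
  have hij : (ComplexShape.down ℤ).Rel i (i - 1) := by simp [ComplexShape.down]
  have := h1 i; have := h2 i; have := h3 i
  have e2 := rank_of_exact _ _ _ (hS.homology_exact₂ i)
  have e3 := rank_of_exact _ _ _ (hS.homology_exact₃ i (i - 1) hij)
  have e1 := rank_of_exact _ _ _ (hS.homology_exact₁ (i + 1) i (rel i))
  have ec := congrδ (i - 1 + 1) i (i - 1) (rel (i - 1)) hij (by ring)
  simp only [ec]
  push_cast [e1, e2, e3]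
  ring

/-- **Morse–Bott type inequality for filtered chain complexes.**
Let `K` be a field and `C` a `ℤ`-indexed chain complex of `K`-vector spaces,
finite-dimensional in every degree, equipped with a finite filtration by subcomplexes
`0 = F⁰C ⊆ F¹C ⊆ … ⊆ FⁿC = C` (encoded by degreewise injections `ι p : F^p C → F^{p+1} C`)
with quotient complexes `Q p = F^{p+1}C / F^pC` (encoded by degreewise surjections
`π p : F^{p+1}C → Q p` with kernel the image of `ι p`).  Then
`dim_t H(C) ⪯ Σ_p dim_t H(Q p)`: there is `A : ℤ → ℕ` such that for all `i`,
`Σ_p dim H_i(Q p) − dim H_i(C) = A i + A (i−1)`; in particular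
`dim H_i(C) ≤ Σ_p dim H_i(Q p)` for every `i`. -/
theorem dimt_filtration_inequality
    (K : Type) [Field K] (n : ℕ)
    (F : Fin (n + 1) → ChainComplex (ModuleCat K) ℤ)
    (Q : Fin n → ChainComplex (ModuleCat K) ℤ)
    (hfin : ∀ (p : Fin (n + 1)) (i : ℤ), FiniteDimensional K ((F p).X i))
    (hzero : ∀ i : ℤ, Subsingleton ((F 0).X i))
    (ι : ∀ p : Fin n, F p.castSucc ⟶ F p.succ)
    (π : ∀ p : Fin n, F p.succ ⟶ Q p)
    (hinj : ∀ (p : Fin n) (i : ℤ), Function.Injective ((ι p).f i))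
    (hexact : ∀ (p : Fin n) (i : ℤ),
      LinearMap.range ((ι p).f i).hom = LinearMap.ker ((π p).f i).hom)
    (hsurj : ∀ (p : Fin n) (i : ℤ), Function.Surjective ((π p).f i)) :
    (∃ A : ℤ → ℕ, ∀ i : ℤ,
      (∑ p : Fin n, (Module.finrank K ((Q p).homology i) : ℤ)) -
        (Module.finrank K ((F (Fin.last n)).homology i) : ℤ)
        = (A i : ℤ) + (A (i - 1) : ℤ)) ∧
    (∀ i : ℤ, Module.finrank K ((F (Fin.last n)).homology i) ≤
      ∑ p : Fin n, Module.finrank K ((Q p).homology i)) := by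
  have hQfin : ∀ (p : Fin n) (i : ℤ), FiniteDimensional K ((Q p).X i) := by
    intro p i
    have := hfin p.succ i
    exact Module.Finite.of_surjective ((π p).f i).hom (hsurj p i)
  have key : ∀ (m : ℕ) (hm : m ≤ n), ∃ A : ℤ → ℕ, ∀ i : ℤ,
      (∑ q : Fin m, (Module.finrank K ((Q (Fin.castLE hm q)).homology i) : ℤ)) -
        (Module.finrank K ((F ⟨m, Nat.lt_succ_of_le hm⟩).homology i) : ℤ)
        = (A i : ℤ) + (A (i - 1) : ℤ) := by
    intro m
    induction m with
    | zero =>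
      intro hm
      refine ⟨fun _ => 0, fun i => ?_⟩
      simp [subsingletonHomology (F 0) hzero i]
      exact subsingletonHomology (F 0) hzero i
    | succ m ih =>
      intro hm
      obtain ⟨A, hA⟩ := ih (Nat.le_of_succ_le hm)
      set p : Fin n := ⟨m, hm⟩ with hp
      have w : ι p ≫ π p = 0 := by
        ext i x
        have hx : ((π p).f i) (((ι p).f i) x) = 0 := by
          have hm' : ((ι p).f i) x ∈ LinearMap.ker ((π p).f i).hom := by
            rw [← hexact p i]; exact LinearMap.mem_range_self _ x
          exact hm'
        simpa using hx
      set S : ShortComplex (HomologicalComplex (ModuleCat K) (ComplexShape.down ℤ)) :=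
        ShortComplex.mk (ι p) (π p) w with hS
      have hSE : S.ShortExact := by
        apply HomologicalComplex.shortExact_of_degreewise_shortExact
        intro i
        exact ShortComplex.ShortExact.mk'
          ((ShortComplex.moduleCat_exact_iff_range_eq_ker _).mpr (hexact p i))
          ((ModuleCat.mono_iff_injective _).mpr (hinj p i))
          ((ModuleCat.epi_iff_surjective _).mpr (hsurj p i))
      obtain ⟨B, hB⟩ := ses_rank S hSE
        (fun i => fdHomology _ (hfin p.castSucc) i)
        (fun i => fdHomology _ (hfin p.succ) i)
        (fun i => fdHomology _ (hQfin p) i)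
      refine ⟨fun i => A i + B i, fun i => ?_⟩
      have h1 := hA i
      have h2 := hB i
      rw [Fin.sum_univ_castSucc]
      have ecast : ∀ q : Fin m,
          (Module.finrank K ((Q (Fin.castLE hm q.castSucc)).homology i) : ℤ) =
          (Module.finrank K ((Q (Fin.castLE (Nat.le_of_succ_le hm) q)).homology i) : ℤ) := by
        intro q; rfl
      simp only [ecast]
      have e2 : Fin.castLE hm (Fin.last m) = p := rfl
      rw [e2]
      have eF1 : (F (Fin.castSucc p)).homology i = (F ⟨m, Nat.lt_succ_of_le (Nat.le_of_succ_le hm)⟩).homology i := rfl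
      have eF2 : (F (Fin.succ p)).homology i = (F ⟨m + 1, Nat.lt_succ_of_le hm⟩).homology i := rfl
      rw [eF1, eF2] at h2
      push_cast at h1 h2 ⊢
      linarith
  obtain ⟨A, hA⟩ := key n le_rfl
  have hfinal : ∀ i : ℤ,
      (∑ p : Fin n, (Module.finrank K ((Q p).homology i) : ℤ)) -
        (Module.finrank K ((F (Fin.last n)).homology i) : ℤ)
        = (A i : ℤ) + (A (i - 1) : ℤ) := by
    intro i
    have := hA i
    simp at this
    exact this
  refine ⟨⟨A, hfinal⟩, fun i => ?_⟩
  have h := hfinal i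
  have : (Module.finrank K ((F (Fin.last n)).homology i) : ℤ) ≤
      ∑ p : Fin n, (Module.finrank K ((Q p).homology i) : ℤ) := by
    have := Int.natCast_nonneg (A i)
    have := Int.natCast_nonneg (A (i - 1))
    linarith
  exact_mod_cast this
end

section
/- Let N ≥ 1, 0 ≤ k ≤ N, and let Z ∈ M_N(ℂ) be the diagonal matrix with diagonal entries d₁, …, d_N, where the d_i are pairwise distinct real numbers. Let P ∈ M_N(ℂ) be a Hermitian idempotent (Pᴴ = P and P² = P) of rank k. Then the following are equivalent: (i) tr((X·P − P·X)·Z) = 0 for every skew-Hermitian matrix X (i.e. Xᴴ = −X); (ii) P·Z = Z·P; (iii) there is a subset S ⊆ {1, …, N} with |S| = k such that P is the diagonal matrix whose i-th diagonal entry is 1 for i ∈ S and 0 otherwise, i.e. P is the orthogonal projection onto the span of the standard basis vectors e_i with i ∈ S. -/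
open Matrix

lemma trace_conjT_mul_self_eq_zero {n : ℕ} (A : Matrix (Fin n) (Fin n) ℂ)
    (h : Matrix.trace (Aᴴ * A) = 0) : A = 0 := by
  have htr : Matrix.trace (Aᴴ * A)
      = ∑ i, ∑ j, ((Complex.normSq (A j i) : ℝ) : ℂ) := by
    simp [Matrix.trace, Matrix.diag, Matrix.mul_apply, Matrix.conjTranspose_apply,
      Complex.normSq_eq_conj_mul_self]
  rw [htr] at h
  have h' : ∑ i, ∑ j, Complex.normSq (A j i) = 0 := by
    have := congrArg Complex.re h
    simpa using this
  ext i j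
  have h3 := (Finset.sum_eq_zero_iff_of_nonneg
      (fun i _ => Finset.sum_nonneg fun j _ => Complex.normSq_nonneg (A j i))).mp
      h' j (Finset.mem_univ j)
  have h4 := (Finset.sum_eq_zero_iff_of_nonneg
      (fun m _ => Complex.normSq_nonneg (A m j))).mp h3 i (Finset.mem_univ i)
  simpa using Complex.normSq_eq_zero.mp h4

/-- **Critical points of `P ↦ tr(P·Z)` on the Grassmannian of rank-`k` Hermitian
projections.** -/
theorem hermitian_projection_critical_tfae
    (N : ℕ) (hN : 1 ≤ N) (k : ℕ) (hk : k ≤ N)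
    (d : Fin N → ℝ) (hd : Function.Injective d)
    (Z : Matrix (Fin N) (Fin N) ℂ) (hZ : Z = Matrix.diagonal fun i => (d i : ℂ))
    (P : Matrix (Fin N) (Fin N) ℂ)
    (hherm : Pᴴ = P) (hidem : P * P = P) (hrank : P.rank = k) :
    List.TFAE
      [∀ X : Matrix (Fin N) (Fin N) ℂ, Xᴴ = -X →
          Matrix.trace ((X * P - P * X) * Z) = 0,
        P * Z = Z * P,
        ∃ S : Finset (Fin N), S.card = k ∧
          P = Matrix.diagonal fun i => if i ∈ S then (1 : ℂ) else 0] := by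
  have hZh : Zᴴ = Z := by
    rw [hZ]
    ext i j
    by_cases hij : i = j
    · subst hij
      simp [Matrix.conjTranspose_apply, Matrix.diagonal_apply_eq, Complex.conj_ofReal]
    · simp [Matrix.conjTranspose_apply, Matrix.diagonal_apply_ne _ hij,
        Matrix.diagonal_apply_ne _ (Ne.symm hij)]
  tfae_have 1 → 2
  | h => by
    set C := P * Z - Z * P with hCdef
    have hC : Cᴴ = -C := by
      simp only [hCdef, Matrix.conjTranspose_sub, Matrix.conjTranspose_mul, hherm, hZh]
      exact (neg_sub _ _).symm
    have h0 := h C hC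
    have key : Matrix.trace ((C * P - P * C) * Z) = Matrix.trace (C * C) := by
      calc Matrix.trace ((C * P - P * C) * Z)
          = Matrix.trace (C * (P * Z)) - Matrix.trace (C * (Z * P)) := by
            rw [Matrix.sub_mul, Matrix.trace_sub, Matrix.mul_assoc C P Z,
              Matrix.trace_mul_cycle P C Z, Matrix.trace_mul_comm (Z * P) C]
        _ = Matrix.trace (C * C) := by
            rw [← Matrix.trace_sub, ← Matrix.mul_sub, ← hCdef]
    rw [key] at h0
    have h1 : Matrix.trace (Cᴴ * C) = 0 := by
      rw [hC, Matrix.neg_mul, Matrix.trace_neg, h0, neg_zero]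
    have h2 := trace_conjT_mul_self_eq_zero C h1
    rw [hCdef] at h2
    exact sub_eq_zero.mp h2
  tfae_have 2 → 3
  | h => by
    have hoff : ∀ i j, i ≠ j → P i j = 0 := by
      intro i j hij
      have h2 : (P * Z) i j = (Z * P) i j := by rw [h]
      rw [hZ, Matrix.mul_diagonal, Matrix.diagonal_mul] at h2
      by_contra hne
      have h3 : P i j * (d j : ℂ) = P i j * (d i : ℂ) := by
        rw [h2]; ring
      have h4 : (d j : ℂ) = (d i : ℂ) := mul_left_cancel₀ hne h3
      exact hij (hd (by exact_mod_cast h4)).symm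
    have hPdiag : P = Matrix.diagonal fun i => P i i := by
      ext i j
      by_cases hij : i = j
      · subst hij; simp
      · rw [Matrix.diagonal_apply_ne _ hij]; exact hoff i j hij
    have h01 : ∀ i, P i i = 0 ∨ P i i = 1 := by
      intro i
      have h2 : (Matrix.diagonal fun i => P i i) * (Matrix.diagonal fun i => P i i)
          = Matrix.diagonal fun i => P i i := by rw [← hPdiag]; exact hidem
      rw [Matrix.diagonal_mul_diagonal] at h2
      have h4 := congrFun (Matrix.diagonal_injective h2) i
      by_cases hx : P i i = 0
      · left; exact hx
      · right
        have : P i i * P i i = P i i * 1 := by simpa [mul_one] using h4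
        exact mul_left_cancel₀ hx this
    refine ⟨Finset.univ.filter (fun i => P i i = 1), ?_, ?_⟩
    · have hiff : ∀ i, P i i ≠ 0 ↔ P i i = 1 := by
        intro i
        constructor
        · intro hne
          rcases h01 i with h' | h'
          · exact absurd h' hne
          · exact h'
        · intro h1; rw [h1]; exact one_ne_zero
      rw [← hrank]
      conv_rhs => rw [hPdiag]
      rw [Matrix.rank_diagonal, Fintype.card_subtype]
      congr 1
      ext i
      simp only [Finset.mem_filter, Finset.mem_univ, true_and]
      exact (hiff i).symm
    · rw [hPdiag]
      ext i j
      by_cases hij : i = j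
      · subst hij
        rcases h01 i with h' | h' <;> simp [h']
      · simp [Matrix.diagonal_apply_ne _ hij]
  tfae_have 3 → 2
  | ⟨S, hS, hP⟩ => by
    rw [hP, hZ, Matrix.diagonal_mul_diagonal, Matrix.diagonal_mul_diagonal]
    ext i j
    by_cases hij : i = j <;> simp [Matrix.diagonal_apply, hij, mul_comm]
  tfae_have 2 → 1
  | h => by
    intro X hX
    rw [Matrix.sub_mul, Matrix.trace_sub, Matrix.trace_mul_cycle P X Z, ← h,
      Matrix.trace_mul_comm (P * Z) X, ← Matrix.mul_assoc, sub_self]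
  tfae_finish
end
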